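/- Let N be a positive integer, e a positive divisor of N, δ ∈ Γ₀(N), and set h = N / gcd(e², N). If n, m, n', m' are integers with n ≡ m (mod h) and n' ≡ m' (mod h), then U_e · T^n · δ · T^{−n'} · U_e^{−1} ∈ Γ₀(N) if and only if U_e · T^m · δ · T^{−m'} · U_e^{−1} ∈ Γ₀(N). -/

import Mathlib

open Matrix CongruenceSubgroup
open scoped MatrixGroups

/-- The matrix `U_e = [[1,0],[e,1]]` in `SL(2, ℤ)`. -/
def Ue (e : ℤ) : SL(2, ℤ) :=
  ⟨!![1, 0; e, 1], by norm_num [Matrix.det_fin_two_of]⟩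

lemma Ue_inv (e : ℤ) : (Ue e)⁻¹ = Ue (-e) := by
  apply inv_eq_of_mul_eq_one_right
  ext i j
  simp only [Matrix.SpecialLinearGroup.coe_mul]
  fin_cases i <;> fin_cases j <;>
    simp [Ue, Matrix.mul_apply, Fin.sum_univ_succ]

lemma entry_eq (e n n' : ℤ) (δ : SL(2, ℤ)) :
    ((Ue e * ModularGroup.T ^ n * δ * ModularGroup.T ^ (-n') * (Ue e)⁻¹ : SL(2, ℤ)) : Matrix (Fin 2) (Fin 2) ℤ) 1 0
      = (δ 1 0) * (e * n + 1 + e * n' * (e * n + 1))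
        + e * (δ 0 0) + e ^ 2 * n' * (δ 0 0) - e ^ 2 * (δ 0 1)
        - e ^ 2 * n * (δ 1 1) - e * (δ 1 1) := by
  rw [Ue_inv]
  simp only [Matrix.SpecialLinearGroup.coe_mul, ModularGroup.coe_T_zpow]
  simp only [Ue]
  simp [Matrix.mul_apply, Matrix.vecMul, dotProduct, Fin.sum_univ_succ]
  ring

lemma dvd_aux (N e : ℕ) (n m : ℤ) (hnm : n ≡ m [ZMOD (N / Nat.gcd (e ^ 2) N)]) :
    (N : ℤ) ∣ (e : ℤ) ^ 2 * (m - n) := by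
  obtain ⟨k, hk⟩ := Nat.gcd_dvd_left (e ^ 2) N
  have hN : Nat.gcd (e ^ 2) N * (N / Nat.gcd (e ^ 2) N) = N :=
    Nat.mul_div_cancel' (Nat.gcd_dvd_right _ _)
  obtain ⟨t, ht⟩ := hnm.dvd
  refine ⟨k * t, ?_⟩
  have he2 : ((e : ℤ) ^ 2) = (Nat.gcd (e ^ 2) N : ℤ) * k := by exact_mod_cast hk
  calc (e : ℤ) ^ 2 * (m - n)
      = (Nat.gcd (e ^ 2) N : ℤ) * k * ((N : ℤ) / (Nat.gcd (e ^ 2) N : ℤ) * t) := by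
        rw [← ht, he2]
    _ = (Nat.gcd (e ^ 2) N : ℤ) * k * (((N / Nat.gcd (e ^ 2) N : ℕ) : ℤ) * t) := by
        rw [Int.natCast_div]
    _ = ((Nat.gcd (e ^ 2) N * (N / Nat.gcd (e ^ 2) N) : ℕ) : ℤ) * (k * t) := by push_cast; ring
    _ = (N : ℤ) * (k * t) := by rw [hN]

/-- Let `N` be a positive integer, `e` a positive divisor of `N`, `δ ∈ Γ₀(N)`, and set
`h = N / gcd(e², N)`.  If `n ≡ m (mod h)` and `n' ≡ m' (mod h)`, then
`U_e T^n δ T^{-n'} U_e⁻¹ ∈ Γ₀(N)` if and only if `U_e T^m δ T^{-m'} U_e⁻¹ ∈ Γ₀(N)`. -/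
theorem stmt_6 (N : ℕ) (hN : 0 < N) (e : ℕ) (he : 0 < e) (heN : e ∣ N)
    (δ : SL(2, ℤ)) (hδ : δ ∈ Gamma0 N) (n m n' m' : ℤ)
    (hnm : n ≡ m [ZMOD (N / Nat.gcd (e ^ 2) N)])
    (hnm' : n' ≡ m' [ZMOD (N / Nat.gcd (e ^ 2) N)]) :
    (Ue (e : ℤ) * ModularGroup.T ^ n * δ * ModularGroup.T ^ (-n') * (Ue (e : ℤ))⁻¹
        ∈ Gamma0 N) ↔
      (Ue (e : ℤ) * ModularGroup.T ^ m * δ * ModularGroup.T ^ (-m') * (Ue (e : ℤ))⁻¹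
        ∈ Gamma0 N) := by
  have hc : (((δ : Matrix (Fin 2) (Fin 2) ℤ) 1 0 : ℤ) : ZMod N) = 0 := Gamma0_mem.mp hδ
  have d1 : (((e : ℤ) ^ 2 * (m - n) : ℤ) : ZMod N) = 0 := by
    rw [ZMod.intCast_zmod_eq_zero_iff_dvd]; exact dvd_aux N e n m hnm
  have d2 : (((e : ℤ) ^ 2 * (m' - n') : ℤ) : ZMod N) = 0 := by
    rw [ZMod.intCast_zmod_eq_zero_iff_dvd]; exact dvd_aux N e n' m' hnm'
  have key : (((Ue (e : ℤ) * ModularGroup.T ^ n * δ * ModularGroup.T ^ (-n') *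
        (Ue (e : ℤ))⁻¹ : SL(2, ℤ)) : Matrix (Fin 2) (Fin 2) ℤ) 1 0 : ZMod N)
      = (((Ue (e : ℤ) * ModularGroup.T ^ m * δ * ModularGroup.T ^ (-m') *
        (Ue (e : ℤ))⁻¹ : SL(2, ℤ)) : Matrix (Fin 2) (Fin 2) ℤ) 1 0 : ZMod N) := by
    rw [entry_eq, entry_eq]
    push_cast at d1 d2 hc ⊢
    linear_combination ((e : ZMod N) * n + e * n' * (e * n + 1) - e * m
        - e * m' * (e * m + 1)) * hc
      + (((δ : Matrix (Fin 2) (Fin 2) ℤ) 1 1 : ZMod N)) * d1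
      - (((δ : Matrix (Fin 2) (Fin 2) ℤ) 0 0 : ZMod N)) * d2
  rw [Gamma0_mem, Gamma0_mem, key]
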